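/- (Dirichlet form equals Carré du Champ.) For every integer N ≥ 2, every ρ ∈ (0,1) and every function f : Σ_N → [0,∞) which is a probability density with respect to ν_ρ (i.e. ∑_η ν_ρ(η) f(η) = 1), one has −∑_{η∈Σ_N} ν_ρ(η) √(f(η)) · (L_N √f)(η) = (1/2) ∑_{(x,y)∈E_N} ∑_{η∈Σ_N} ν_ρ(η) c_{x,y}(η) (√(f(η^{x,y})) − √(f(η)))². -/
import Mathlib


open Finset

/-- The two-dimensional discrete torus `Λ_N = ℤ²/Nℤ²`. -/
abbrev Torus (N : ℕ) := ZMod N × ZMod N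

/-- Particle configurations `Σ_N = {0,1}^{Λ_N}`. -/
abbrev Config (N : ℕ) := Torus N → Bool

/-- Occupation number as a real number. -/
noncomputable def bval (b : Bool) : ℝ := if b then 1 else 0

/-- The four unit directions `e¹, e², -e¹, -e²`. -/
def dvec (N : ℕ) : Fin 4 → Torus N := ![(1, 0), (0, 1), (-1, 0), (0, -1)]

/-- Reversal of a direction. -/
def rev : Fin 4 → Fin 4 := ![2, 3, 0, 1]

/-- The two coordinate unit vectors `e¹, e²`. -/
def ee (N : ℕ) : Fin 2 → Torus N := ![(1, 0), (0, 1)]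

/-- `η^{x,y}` : exchange the occupation values at `x` and `y`. -/
def swap {N : ℕ} (η : Config N) (x y : Torus N) : Config N :=
  fun z => if z = x then η y else if z = y then η x else η z

/-- Translation of configurations, `(τ_z η)(w) = η(w - z)`. -/
def trc {N : ℕ} (z : Torus N) (η : Config N) : Config N := fun w => η (w - z)

/-- Translation of functions, `(τ_z h)(η) = h(τ_{-z} η)`. -/
def trf {N : ℕ} (z : Torus N) (h : Config N → ℝ) : Config N → ℝ := fun η => h (trc (-z) η)

/-- The local function `g` on the face with lower-left corner `0`. -/
noncomputable def gfun {N : ℕ} (α : ℝ) (η : Config N) : ℝ :=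
  if η (0, 0) = true ∧ η (1, 1) = true ∧ η (1, 0) = false ∧ η (0, 1) = false then α
  else if η (1, 0) = true ∧ η (0, 1) = true ∧ η (0, 0) = false ∧ η (1, 1) = false then α
  else 0

/-- Lower-left corner of the anticlockwise face `f⁺(x, x + dvec d)` traversing the edge
according to its orientation. -/
def fplus {N : ℕ} (x : Torus N) (d : Fin 4) : Torus N :=
  ![x, x - (1, 0), x - (1, 0) - (0, 1), x - (0, 1)] d

/-- Lower-left corner of the anticlockwise face `f⁻(x, x + dvec d)` traversing the reversed
edge according to its orientation. -/
def fminus {N : ℕ} (x : Torus N) (d : Fin 4) : Torus N :=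
  ![x - (0, 1), x, x - (1, 0), x - (1, 0) - (0, 1)] d

/-- The jump rate `c_{x, x + dvec d}(η)`. -/
noncomputable def rate {N : ℕ} (α : ℝ) (η : Config N) (x : Torus N) (d : Fin 4) : ℝ :=
  bval (η x) * (1 - bval (η (x + dvec N d)))
    + bval (η x) * (trf (fplus x d) (gfun α) η - trf (fminus x d) (gfun α) η)

/-- The Bernoulli product measure `ν_ρ`. -/
noncomputable def nu {N : ℕ} [NeZero N] (ρ : ℝ) (η : Config N) : ℝ :=
  ∏ x : Torus N, if η x then ρ else 1 - ρ

/-- The generator `L_N`. -/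
noncomputable def gen {N : ℕ} [NeZero N] (α : ℝ) (F : Config N → ℝ) (η : Config N) : ℝ :=
  ∑ x : Torus N, ∑ d : Fin 4, rate α η x d * (F (swap η x (x + dvec N d)) - F η)

/-- Sum of an edge function over the four directed edges of the anticlockwise oriented face
with lower-left corner `w`. -/
noncomputable def faceCCW {N : ℕ} (F : Torus N → Fin 4 → ℝ) (w : Torus N) : ℝ :=
  F w 0 + F (w + (1, 0)) 1 + F (w + (1, 0) + (0, 1)) 2 + F (w + (0, 1)) 3

/-- Sum of an edge function over the four directed edges of the clockwise oriented face
with lower-left corner `w`. -/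
noncomputable def faceCW {N : ℕ} (F : Torus N → Fin 4 → ℝ) (w : Torus N) : ℝ :=
  F w 1 + F (w + (0, 1)) 0 + F (w + (1, 0) + (0, 1)) 3 + F (w + (1, 0)) 2

section Auxiliary

variable {N : ℕ}

lemma swap_eq_comp (η : Config N) (x y : Torus N) :
    swap η x y = fun z => η (Equiv.swap x y z) := by
  funext z
  simp only [swap, Equiv.swap_apply_def]
  split_ifs <;> rfl

lemma swap_swap (η : Config N) (x y : Torus N) : swap (swap η x y) x y = η := by
  funext z
  simp [swap_eq_comp, Equiv.swap_apply_self]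

lemma swap_apply_left (η : Config N) (x y : Torus N) : swap η x y x = η y := if_pos rfl

lemma swap_apply_right (η : Config N) (x y : Torus N) : swap η x y y = η x := by
  by_cases h : y = x
  · subst h; simp [swap]
  · simp [swap, h]

lemma nu_swap [NeZero N] (ρ : ℝ) (η : Config N) (x y : Torus N) :
    nu ρ (swap η x y) = nu ρ η := by
  simp only [nu, swap_eq_comp]
  exact Equiv.prod_comp (Equiv.swap x y) fun z => if η z then ρ else 1 - ρ

/-- Exchanging the values at `x` and `y` as a permutation of configurations. -/
def swapPerm (x y : Torus N) : Equiv.Perm (Config N) where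
  toFun η := swap η x y
  invFun η := swap η x y
  left_inv η := swap_swap η x y
  right_inv η := swap_swap η x y

lemma sum_swap_config [NeZero N] (x y : Torus N) (G : Config N → ℝ) :
    ∑ η : Config N, G (swap η x y) = ∑ η : Config N, G η :=
  Equiv.sum_comp (swapPerm x y) G

lemma shift_sum [NeZero N] (c : Torus N) {F G : Torus N → ℝ}
    (h : ∀ w, F (w + c) = G w) : ∑ x : Torus N, F x = ∑ w : Torus N, G w := by
  rw [← Equiv.sum_comp (Equiv.addRight c) F]
  exact Finset.sum_congr rfl fun w _ => h w

lemma sum3_comm [NeZero N] (H : Torus N → Fin 4 → Config N → ℝ) :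
    ∑ η : Config N, ∑ x : Torus N, ∑ d : Fin 4, H x d η
      = ∑ x : Torus N, ∑ d : Fin 4, ∑ η : Config N, H x d η := by
  rw [Finset.sum_comm]
  exact Finset.sum_congr rfl fun x _ => by rw [Finset.sum_comm]

/-- `gfun` evaluated on a swapped, translated configuration, as a function of the four
corner values. -/
noncomputable def gaux (α : ℝ) (a b c d : Bool) : ℝ :=
  if a = true ∧ c = true ∧ b = false ∧ d = false then α
  else if b = true ∧ d = true ∧ a = false ∧ c = false then α
  else 0

lemma gfun_trc_swap (α : ℝ) (ζ : Config N) (w x y : Torus N) :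
    gfun α (trc (-w) (swap ζ x y)) =
      gaux α (swap ζ x y w) (swap ζ x y (w+(1,0))) (swap ζ x y (w+(1,0)+(0,1)))
        (swap ζ x y (w+(0,1))) := by
  have e00 : ((0:ZMod N),(0:ZMod N)) - (-w) = w := by apply Prod.ext <;> simp
  have e10 : ((1:ZMod N),(0:ZMod N)) - (-w) = w + (1,0) := by
    apply Prod.ext <;> simp <;> ring
  have e11 : ((1:ZMod N),(1:ZMod N)) - (-w) = w + (1,0) + (0,1) := by
    apply Prod.ext <;> simp <;> ring
  have e01 : ((0:ZMod N),(1:ZMod N)) - (-w) = w + (0,1) := by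
    apply Prod.ext <;> simp <;> ring
  simp only [gfun, gaux, trc, e00, e10, e11, e01]

lemma face_zero [NeZero N] (hN : 2 ≤ N) (α : ℝ) (ζ : Config N) (w : Torus N) :
    bval (ζ (w+(1,0))) * gfun α (trc (-w) (swap ζ w (w+(1,0))))
    + bval (ζ (w+(1,0)+(0,1))) * gfun α (trc (-w) (swap ζ (w+(1,0)) (w+(1,0)+(0,1))))
    + bval (ζ (w+(0,1))) * gfun α (trc (-w) (swap ζ (w+(1,0)+(0,1)) (w+(0,1))))
    + bval (ζ w) * gfun α (trc (-w) (swap ζ (w+(0,1)) w))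
    - bval (ζ (w+(1,0)+(0,1))) * gfun α (trc (-w) (swap ζ (w+(0,1)) (w+(1,0)+(0,1))))
    - bval (ζ (w+(0,1))) * gfun α (trc (-w) (swap ζ w (w+(0,1))))
    - bval (ζ w) * gfun α (trc (-w) (swap ζ (w+(1,0)) w))
    - bval (ζ (w+(1,0))) * gfun α (trc (-w) (swap ζ (w+(1,0)+(0,1)) (w+(1,0)))) = 0 := by
  haveI : Fact (1 < N) := ⟨hN⟩
  have o1 : (1 : ZMod N) ≠ 0 := one_ne_zero
  have f1 : w + (1,0) ≠ w := by simp [Prod.ext_iff, o1]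
  have f2 : w + (1,0) + (0,1) ≠ w := by simp [Prod.ext_iff, o1]
  have f3 : w + (0,1) ≠ w := by simp [Prod.ext_iff, o1]
  have f4 : w + (1,0) + (0,1) ≠ w + (1,0) := by simp [Prod.ext_iff, o1]
  have f5 : w + (0,1) ≠ w + (1,0) := by simp [Prod.ext_iff, o1]
  have f6 : w + (0,1) ≠ w + (1,0) + (0,1) := by simp [Prod.ext_iff, o1]
  simp only [gfun_trc_swap]
  simp only [swap, if_pos rfl, f1, f2, f3, f4, f5, f6, f1.symm, f2.symm, f3.symm, f4.symm,
    f5.symm, f6.symm, Ne.symm f1, Ne.symm f2, Ne.symm f3, Ne.symm f4, Ne.symm f5, Ne.symm f6,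
    if_true, if_false, if_neg]
  rcases h1 : ζ w <;> rcases h2 : ζ (w+(1,0)) <;> rcases h3 : ζ (w+(1,0)+(0,1)) <;>
    rcases h4 : ζ (w+(0,1)) <;> simp [h1, h2, h3, h4, gaux, bval]

/-- The antisymmetric part of the rates sums to zero. -/
lemma asym_sum [NeZero N] (α : ℝ) (ζ : Config N) :
    ∑ x : Torus N, ∑ d : Fin 4,
      bval (ζ x) * (trf (fplus x d) (gfun α) ζ - trf (fminus x d) (gfun α) ζ) = 0 := by
  apply Finset.sum_eq_zero
  intro x _
  rw [Fin.sum_univ_four]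
  simp only [fplus, fminus, trf, Matrix.cons_val_zero, Matrix.cons_val_one,
    Matrix.head_cons, Matrix.cons_val_two, Matrix.tail_cons, Matrix.cons_val_three]
  ring

/-- The antisymmetric part of the rates of the swapped configurations sums to zero. -/
lemma asym_swap [NeZero N] (hN : 2 ≤ N) (α : ℝ) (ζ : Config N) :
    ∑ x : Torus N, ∑ d : Fin 4, bval (ζ (x + dvec N d)) *
      (trf (fplus x d) (gfun α) (swap ζ x (x + dvec N d)) -
       trf (fminus x d) (gfun α) (swap ζ x (x + dvec N d))) = 0 := by
  rw [Finset.sum_comm]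
  rw [Fin.sum_univ_four]
  simp only [dvec, fplus, fminus, trf, Matrix.cons_val_zero, Matrix.cons_val_one,
    Matrix.head_cons, Matrix.cons_val_two, Matrix.tail_cons, Matrix.cons_val_three, mul_sub]
  rw [Finset.sum_sub_distrib, Finset.sum_sub_distrib, Finset.sum_sub_distrib,
    Finset.sum_sub_distrib]
  have hM0 : (∑ x : Torus N, bval (ζ (x + (1,0))) * gfun α (trc (-(x - (0,1))) (swap ζ x (x + (1,0)))))
      = ∑ w : Torus N, bval (ζ (w+(1,0)+(0,1))) * gfun α (trc (-w) (swap ζ (w+(0,1)) (w+(1,0)+(0,1)))) := by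
    apply shift_sum ((0:ZMod N),(1:ZMod N))
    intro w
    have e1 : w + (0,1) + (1,0) = w + (1,0) + (0,1) := by apply Prod.ext <;> simp <;> ring
    have e2 : w + ((0:ZMod N),(1:ZMod N)) - (0,1) = w := by apply Prod.ext <;> simp
    rw [e1, e2]
  have hP1 : (∑ x : Torus N, bval (ζ (x + (0,1))) * gfun α (trc (-(x - (1,0))) (swap ζ x (x + (0,1)))))
      = ∑ w : Torus N, bval (ζ (w+(1,0)+(0,1))) * gfun α (trc (-w) (swap ζ (w+(1,0)) (w+(1,0)+(0,1)))) := by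
    apply shift_sum ((1:ZMod N),(0:ZMod N))
    intro w
    have e2 : w + ((1:ZMod N),(0:ZMod N)) - (1,0) = w := by apply Prod.ext <;> simp
    rw [e2]
  have hP2 : (∑ x : Torus N, bval (ζ (x + (-1,0))) * gfun α (trc (-(x - (1,0) - (0,1))) (swap ζ x (x + (-1,0)))))
      = ∑ w : Torus N, bval (ζ (w+(0,1))) * gfun α (trc (-w) (swap ζ (w+(1,0)+(0,1)) (w+(0,1)))) := by
    apply shift_sum (((1:ZMod N),(0:ZMod N)) + ((0:ZMod N),(1:ZMod N)))
    intro w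
    have e1 : w + (((1:ZMod N),(0:ZMod N)) + ((0:ZMod N),(1:ZMod N))) + (-1,0) = w + (0,1) := by
      apply Prod.ext <;> simp <;> ring
    have e2 : w + (((1:ZMod N),(0:ZMod N)) + ((0:ZMod N),(1:ZMod N))) - (1,0) - (0,1) = w := by
      apply Prod.ext <;> simp <;> ring
    have e3 : w + (((1:ZMod N),(0:ZMod N)) + ((0:ZMod N),(1:ZMod N))) = w + (1,0) + (0,1) := by
      apply Prod.ext <;> simp <;> ring
    rw [e1, e2, e3]
  have hM2 : (∑ x : Torus N, bval (ζ (x + (-1,0))) * gfun α (trc (-(x - (1,0))) (swap ζ x (x + (-1,0)))))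
      = ∑ w : Torus N, bval (ζ w) * gfun α (trc (-w) (swap ζ (w+(1,0)) w)) := by
    apply shift_sum ((1:ZMod N),(0:ZMod N))
    intro w
    have e1 : w + ((1:ZMod N),(0:ZMod N)) + (-1,0) = w := by apply Prod.ext <;> simp <;> ring
    have e2 : w + ((1:ZMod N),(0:ZMod N)) - (1,0) = w := by apply Prod.ext <;> simp
    rw [e1, e2]
  have hP3 : (∑ x : Torus N, bval (ζ (x + (0,-1))) * gfun α (trc (-(x - (0,1))) (swap ζ x (x + (0,-1)))))
      = ∑ w : Torus N, bval (ζ w) * gfun α (trc (-w) (swap ζ (w+(0,1)) w)) := by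
    apply shift_sum ((0:ZMod N),(1:ZMod N))
    intro w
    have e1 : w + ((0:ZMod N),(1:ZMod N)) + (0,-1) = w := by apply Prod.ext <;> simp <;> ring
    have e2 : w + ((0:ZMod N),(1:ZMod N)) - (0,1) = w := by apply Prod.ext <;> simp
    rw [e1, e2]
  have hM3 : (∑ x : Torus N, bval (ζ (x + (0,-1))) * gfun α (trc (-(x - (1,0) - (0,1))) (swap ζ x (x + (0,-1)))))
      = ∑ w : Torus N, bval (ζ (w+(1,0))) * gfun α (trc (-w) (swap ζ (w+(1,0)+(0,1)) (w+(1,0)))) := by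
    apply shift_sum (((1:ZMod N),(0:ZMod N)) + ((0:ZMod N),(1:ZMod N)))
    intro w
    have e1 : w + (((1:ZMod N),(0:ZMod N)) + ((0:ZMod N),(1:ZMod N))) + (0,-1) = w + (1,0) := by
      apply Prod.ext <;> simp <;> ring
    have e2 : w + (((1:ZMod N),(0:ZMod N)) + ((0:ZMod N),(1:ZMod N))) - (1,0) - (0,1) = w := by
      apply Prod.ext <;> simp <;> ring
    have e3 : w + (((1:ZMod N),(0:ZMod N)) + ((0:ZMod N),(1:ZMod N))) = w + (1,0) + (0,1) := by
      apply Prod.ext <;> simp <;> ring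
    rw [e1, e2, e3]
  rw [hM0, hP1, hP2, hM2, hP3, hM3]
  have hsum : ∑ w : Torus N,
      (bval (ζ (w+(1,0))) * gfun α (trc (-w) (swap ζ w (w+(1,0))))
      + bval (ζ (w+(1,0)+(0,1))) * gfun α (trc (-w) (swap ζ (w+(1,0)) (w+(1,0)+(0,1))))
      + bval (ζ (w+(0,1))) * gfun α (trc (-w) (swap ζ (w+(1,0)+(0,1)) (w+(0,1))))
      + bval (ζ w) * gfun α (trc (-w) (swap ζ (w+(0,1)) w))
      - bval (ζ (w+(1,0)+(0,1))) * gfun α (trc (-w) (swap ζ (w+(0,1)) (w+(1,0)+(0,1))))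
      - bval (ζ (w+(0,1))) * gfun α (trc (-w) (swap ζ w (w+(0,1))))
      - bval (ζ w) * gfun α (trc (-w) (swap ζ (w+(1,0)) w))
      - bval (ζ (w+(1,0))) * gfun α (trc (-w) (swap ζ (w+(1,0)+(0,1)) (w+(1,0))))) = 0 :=
    Finset.sum_eq_zero fun w _ => face_zero hN α ζ w
  simp only [Finset.sum_sub_distrib, Finset.sum_add_distrib] at hsum
  linarith [hsum]

/-- The symmetric part of the rates is invariant under reversing all edges. -/
lemma sym_swap [NeZero N] (ζ : Config N) :
    ∑ x : Torus N, ∑ d : Fin 4, bval (ζ (x + dvec N d)) * (1 - bval (ζ x))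
      = ∑ x : Torus N, ∑ d : Fin 4, bval (ζ x) * (1 - bval (ζ (x + dvec N d))) := by
  rw [Finset.sum_comm]
  conv_rhs => rw [Finset.sum_comm]
  rw [Fin.sum_univ_four, Fin.sum_univ_four]
  simp only [dvec, Matrix.cons_val_zero, Matrix.cons_val_one, Matrix.head_cons,
    Matrix.cons_val_two, Matrix.tail_cons, Matrix.cons_val_three]
  have h0 : (∑ x : Torus N, bval (ζ (x + (1,0))) * (1 - bval (ζ x)))
      = ∑ w : Torus N, bval (ζ w) * (1 - bval (ζ (w + (-1,0)))) := by
    apply shift_sum ((-1:ZMod N),(0:ZMod N))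
    intro w
    have e1 : w + ((-1:ZMod N),(0:ZMod N)) + (1,0) = w := by apply Prod.ext <;> simp <;> ring
    rw [e1]
  have h1 : (∑ x : Torus N, bval (ζ (x + (0,1))) * (1 - bval (ζ x)))
      = ∑ w : Torus N, bval (ζ w) * (1 - bval (ζ (w + (0,-1)))) := by
    apply shift_sum ((0:ZMod N),(-1:ZMod N))
    intro w
    have e1 : w + ((0:ZMod N),(-1:ZMod N)) + (0,1) = w := by apply Prod.ext <;> simp <;> ring
    rw [e1]
  have h2 : (∑ x : Torus N, bval (ζ (x + (-1,0))) * (1 - bval (ζ x)))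
      = ∑ w : Torus N, bval (ζ w) * (1 - bval (ζ (w + (1,0)))) := by
    apply shift_sum ((1:ZMod N),(0:ZMod N))
    intro w
    have e1 : w + ((1:ZMod N),(0:ZMod N)) + (-1,0) = w := by apply Prod.ext <;> simp <;> ring
    rw [e1]
  have h3 : (∑ x : Torus N, bval (ζ (x + (0,-1))) * (1 - bval (ζ x)))
      = ∑ w : Torus N, bval (ζ w) * (1 - bval (ζ (w + (0,1)))) := by
    apply shift_sum ((0:ZMod N),(1:ZMod N))
    intro w
    have e1 : w + ((0:ZMod N),(1:ZMod N)) + (0,-1) = w := by apply Prod.ext <;> simp <;> ring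
    rw [e1]
  rw [h0, h1, h2, h3]
  rw [← Finset.sum_add_distrib, ← Finset.sum_add_distrib, ← Finset.sum_add_distrib,
    ← Finset.sum_add_distrib, ← Finset.sum_add_distrib, ← Finset.sum_add_distrib]
  apply Finset.sum_congr rfl
  intro w _
  ring

/-- Key lemma: the total swapped rate equals the total rate. -/
lemma rate_sum_swap [NeZero N] (hN : 2 ≤ N) (α : ℝ) (ζ : Config N) :
    ∑ x : Torus N, ∑ d : Fin 4, rate α (swap ζ x (x + dvec N d)) x d
      = ∑ x : Torus N, ∑ d : Fin 4, rate α ζ x d := by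
  simp only [rate, swap_apply_left, swap_apply_right]
  simp only [Finset.sum_add_distrib]
  rw [asym_swap hN α ζ, asym_sum α ζ, add_zero, add_zero]
  exact sym_swap ζ

/-- The "detailed-balance-after-summation" identity. -/
lemma swap_weight_sum [NeZero N] (hN : 2 ≤ N) (α ρ : ℝ) (F : Config N → ℝ) :
    ∑ x : Torus N, ∑ d : Fin 4, ∑ η : Config N,
        nu ρ η * rate α η x d * F (swap η x (x + dvec N d))
      = ∑ x : Torus N, ∑ d : Fin 4, ∑ η : Config N, nu ρ η * rate α η x d * F η := by
  have step1 : ∀ (x : Torus N) (d : Fin 4),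
      ∑ η : Config N, nu ρ η * rate α η x d * F (swap η x (x + dvec N d))
        = ∑ η : Config N, nu ρ η * rate α (swap η x (x + dvec N d)) x d * F η := by
    intro x d
    have h := sum_swap_config (N := N) x (x + dvec N d)
      (fun η => nu ρ η * rate α η x d * F (swap η x (x + dvec N d)))
    rw [← h]
    apply Finset.sum_congr rfl
    intro η _
    simp only [nu_swap, swap_swap]
  calc ∑ x : Torus N, ∑ d : Fin 4, ∑ η : Config N,
          nu ρ η * rate α η x d * F (swap η x (x + dvec N d))
      = ∑ x : Torus N, ∑ d : Fin 4, ∑ η : Config N,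
          nu ρ η * rate α (swap η x (x + dvec N d)) x d * F η :=
        Finset.sum_congr rfl fun x _ => Finset.sum_congr rfl fun d _ => step1 x d
    _ = ∑ η : Config N, ∑ x : Torus N, ∑ d : Fin 4,
          nu ρ η * rate α (swap η x (x + dvec N d)) x d * F η := (sum3_comm _).symm
    _ = ∑ η : Config N, (nu ρ η * F η) *
          ∑ x : Torus N, ∑ d : Fin 4, rate α (swap η x (x + dvec N d)) x d := by
        apply Finset.sum_congr rfl
        intro η _
        rw [Finset.mul_sum]
        apply Finset.sum_congr rfl
        intro x _
        rw [Finset.mul_sum]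
        apply Finset.sum_congr rfl
        intro d _
        ring
    _ = ∑ η : Config N, (nu ρ η * F η) * ∑ x : Torus N, ∑ d : Fin 4, rate α η x d := by
        apply Finset.sum_congr rfl
        intro η _
        rw [rate_sum_swap hN α η]
    _ = ∑ η : Config N, ∑ x : Torus N, ∑ d : Fin 4, nu ρ η * rate α η x d * F η := by
        apply Finset.sum_congr rfl
        intro η _
        rw [Finset.mul_sum]
        apply Finset.sum_congr rfl
        intro x _
        rw [Finset.mul_sum]
        apply Finset.sum_congr rfl
        intro d _
        ring
    _ = ∑ x : Torus N, ∑ d : Fin 4, ∑ η : Config N, nu ρ η * rate α η x d * F η :=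
        sum3_comm _

end Auxiliary

/-- the Dirichlet form equals the Carré du Champ:
`-⟨L_N √f, √f⟩_{ν_ρ} = 𝔇_N(√f, ν_ρ)`. -/
theorem stmt_16 (N : ℕ) [NeZero N] (hN : 2 ≤ N) (α : ℝ) (hα : |α| < 1)
    (ρ : ℝ) (hρ : ρ ∈ Set.Ioo (0 : ℝ) 1) (f : Config N → ℝ)
    (hf0 : ∀ η : Config N, 0 ≤ f η) (hf1 : ∑ η : Config N, nu ρ η * f η = 1) :
    -(∑ η : Config N, nu ρ η * (Real.sqrt (f η)
        * gen α (fun ζ => Real.sqrt (f ζ)) η))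
      = (1 / 2) * ∑ x : Torus N, ∑ d : Fin 4, ∑ η : Config N,
          nu ρ η * rate α η x d
            * (Real.sqrt (f (swap η x (x + dvec N d))) - Real.sqrt (f η)) ^ 2 := by
  have hsq : ∀ η : Config N, Real.sqrt (f η) * Real.sqrt (f η) = f η :=
    fun η => Real.mul_self_sqrt (hf0 η)
  have claim1 : ∑ η : Config N, nu ρ η * (Real.sqrt (f η)
        * gen α (fun ζ => Real.sqrt (f ζ)) η)
      = (∑ x : Torus N, ∑ d : Fin 4, ∑ η : Config N,
          nu ρ η * rate α η x d * (Real.sqrt (f (swap η x (x + dvec N d))) * Real.sqrt (f η)))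
        - ∑ x : Torus N, ∑ d : Fin 4, ∑ η : Config N, nu ρ η * rate α η x d * f η := by
    calc ∑ η : Config N, nu ρ η * (Real.sqrt (f η) * gen α (fun ζ => Real.sqrt (f ζ)) η)
        = ∑ η : Config N, ∑ x : Torus N, ∑ d : Fin 4,
            (nu ρ η * rate α η x d
                * (Real.sqrt (f (swap η x (x + dvec N d))) * Real.sqrt (f η))
              - nu ρ η * rate α η x d * f η) := by
          apply Finset.sum_congr rfl
          intro η _
          simp only [gen, Finset.mul_sum]
          apply Finset.sum_congr rfl
          intro x _
          apply Finset.sum_congr rfl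
          intro d _
          linear_combination (-(nu ρ η * rate α η x d)) * hsq η
      _ = _ := by
          simp only [Finset.sum_sub_distrib]
          rw [sum3_comm, sum3_comm]
  have claim2 : ∑ x : Torus N, ∑ d : Fin 4, ∑ η : Config N,
        nu ρ η * rate α η x d
          * (Real.sqrt (f (swap η x (x + dvec N d))) - Real.sqrt (f η)) ^ 2
      = (∑ x : Torus N, ∑ d : Fin 4, ∑ η : Config N,
          nu ρ η * rate α η x d * f (swap η x (x + dvec N d)))
        - (∑ x : Torus N, ∑ d : Fin 4, ∑ η : Config N,
            nu ρ η * rate α η x d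
              * (Real.sqrt (f (swap η x (x + dvec N d))) * Real.sqrt (f η)))
        - (∑ x : Torus N, ∑ d : Fin 4, ∑ η : Config N,
            nu ρ η * rate α η x d
              * (Real.sqrt (f (swap η x (x + dvec N d))) * Real.sqrt (f η)))
        + ∑ x : Torus N, ∑ d : Fin 4, ∑ η : Config N, nu ρ η * rate α η x d * f η := by
    calc ∑ x : Torus N, ∑ d : Fin 4, ∑ η : Config N,
          nu ρ η * rate α η x d
            * (Real.sqrt (f (swap η x (x + dvec N d))) - Real.sqrt (f η)) ^ 2
        = ∑ x : Torus N, ∑ d : Fin 4, ∑ η : Config N,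
            (nu ρ η * rate α η x d * f (swap η x (x + dvec N d))
              - nu ρ η * rate α η x d
                  * (Real.sqrt (f (swap η x (x + dvec N d))) * Real.sqrt (f η))
              - nu ρ η * rate α η x d
                  * (Real.sqrt (f (swap η x (x + dvec N d))) * Real.sqrt (f η))
              + nu ρ η * rate α η x d * f η) := by
          apply Finset.sum_congr rfl
          intro x _
          apply Finset.sum_congr rfl
          intro d _
          apply Finset.sum_congr rfl
          intro η _
          linear_combination (nu ρ η * rate α η x d) * hsq (swap η x (x + dvec N d))
            + (nu ρ η * rate α η x d) * hsq η
      _ = _ := by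
          simp only [Finset.sum_add_distrib, Finset.sum_sub_distrib]
  have hD := swap_weight_sum (N := N) hN α ρ f
  rw [claim1, claim2, hD]
  ring
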